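/- The functional F ↦ ∫_B |F| · log( e + |F|/|F|_B ) dx on measurable functions on a ball B (where |F|_B is the average of |F| over B) satisfies the triangle inequality ‖F+G‖ ≤ ‖F‖ + ‖G‖, and hence defines a norm on the Zygmund space L log L(B). -/

import Mathlib

open MeasureTheory Metric ENNReal
noncomputable section

/-- The Zygmund functional `F ↦ ∫_B |F| log(e + |F|/|F|_B)` on a ball `B`,
where `|F|_B` is the average of `|F|` over `B`. -/
def zygmundNorm {n : ℕ} (B : Set (EuclideanSpace ℝ (Fin n)))
    (F : EuclideanSpace ℝ (Fin n) → ℝ) : ℝ≥0∞ :=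
  ∫⁻ y in B, ‖F y‖₊ *
    ENNReal.ofReal (Real.log (Real.exp 1 + |F y| / ⨍ z in B, |F z|))

lemma one_le_log_exp_add (x : ℝ) (hx : 0 ≤ x) : 1 ≤ Real.log (Real.exp 1 + x) := by
  calc (1:ℝ) = Real.log (Real.exp 1) := (Real.log_exp 1).symm
  _ ≤ Real.log (Real.exp 1 + x) := Real.log_le_log (Real.exp_pos 1) (by linarith)

/-- Tangent inequality for the convex function `x ↦ x log (e + x)`. -/
lemma tangent_aux (x τ : ℝ) (hx : 0 ≤ x) (hτ : 0 ≤ τ) :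
    x * Real.log (Real.exp 1 + τ) + τ * (x - τ) / (Real.exp 1 + τ)
      ≤ x * Real.log (Real.exp 1 + x) := by
  have he : 0 < Real.exp 1 := Real.exp_pos 1
  have hex : 0 < Real.exp 1 + x := by linarith
  have heτ : 0 < Real.exp 1 + τ := by linarith
  have h1 : (x - τ) / (Real.exp 1 + x)
      ≤ Real.log (Real.exp 1 + x) - Real.log (Real.exp 1 + τ) := by
    have h := Real.log_le_sub_one_of_pos
      (x := (Real.exp 1 + τ) / (Real.exp 1 + x)) (by positivity)
    rw [Real.log_div (by linarith) (by linarith)] at h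
    have h2 : (Real.exp 1 + τ) / (Real.exp 1 + x) - 1 = (τ - x) / (Real.exp 1 + x) := by
      field_simp
      ring
    rw [h2] at h
    have h3 : (x - τ) / (Real.exp 1 + x) = -((τ - x) / (Real.exp 1 + x)) := by ring
    linarith
  have h3 : τ * (x - τ) / (Real.exp 1 + τ) ≤ x * (x - τ) / (Real.exp 1 + x) := by
    rw [div_le_div_iff₀ heτ hex]
    nlinarith [mul_nonneg he.le (sq_nonneg (x - τ))]
  have h4 : x * ((x - τ) / (Real.exp 1 + x)) = x * (x - τ) / (Real.exp 1 + x) :=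
    (mul_div_assoc x _ _).symm
  nlinarith [mul_le_mul_of_nonneg_left h1 hx]

/-- Perspective tangent inequality: the tangent plane of `Φ(u,v) = u·log(e+u/v)`
at the point `(t, C)` lies below `Φ`. -/
lemma tangent_main (u v t C : ℝ) (hu : 0 ≤ u) (hv : 0 < v) (ht : 0 ≤ t) (hC : 0 < C) :
    (Real.log (Real.exp 1 + t / C) + t / (Real.exp 1 * C + t)) * u
      ≤ u * Real.log (Real.exp 1 + u / v)
        + t ^ 2 / (C * (Real.exp 1 * C + t)) * v := by
  have he : 0 < Real.exp 1 := Real.exp_pos 1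
  have hD : 0 < Real.exp 1 * C + t := by positivity
  have key := tangent_aux (u / v) (t / C) (by positivity) (by positivity)
  have h := mul_le_mul_of_nonneg_left key hv.le
  have e1 : v * (u / v * Real.log (Real.exp 1 + t / C)
        + t / C * (u / v - t / C) / (Real.exp 1 + t / C))
      = (Real.log (Real.exp 1 + t / C) + t / (Real.exp 1 * C + t)) * u
        - t ^ 2 / (C * (Real.exp 1 * C + t)) * v := by
    rw [show Real.exp 1 + t / C = (Real.exp 1 * C + t) / C by field_simp]
    field_simp
    ring
  have e2 : v * (u / v * Real.log (Real.exp 1 + u / v))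
      = u * Real.log (Real.exp 1 + u / v) := by
    field_simp
  rw [e1, e2] at h
  linarith

/-- Euler identity: `Φ` is 1-homogeneous, so the tangent plane at `(t,C)` passes
through `(t, C, Φ(t,C))`. -/
lemma euler_main (t C : ℝ) (ht : 0 ≤ t) (hC : 0 < C) :
    (Real.log (Real.exp 1 + t / C) + t / (Real.exp 1 * C + t)) * t
      = t * Real.log (Real.exp 1 + t / C) + t ^ 2 / (C * (Real.exp 1 * C + t)) * C := by
  have hD : 0 < Real.exp 1 * C + t := by positivity
  field_simp

/-- Key subadditivity of the Zygmund functional over a general finite measure.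
The proof uses that `Φ(u,v) = u·log(e+u/v)` is jointly convex and 1-homogeneous
(the perspective of `x ↦ x log(e+x)`), via tangent planes at `(|F+G|, ⨍|F+G|)`. -/
theorem zyg_key {X : Type*} [MeasurableSpace X] (μ : Measure X) [IsFiniteMeasure μ]
    (F G : X → ℝ) (hF : Integrable F μ) (hG : Integrable G μ) :
    ∫⁻ y, ‖F y + G y‖₊ *
        ENNReal.ofReal (Real.log (Real.exp 1 + |F y + G y| / ⨍ z, |F z + G z| ∂μ)) ∂μ
      ≤ (∫⁻ y, ‖F y‖₊ *
            ENNReal.ofReal (Real.log (Real.exp 1 + |F y| / ⨍ z, |F z| ∂μ)) ∂μ)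
        + ∫⁻ y, ‖G y‖₊ *
            ENNReal.ofReal (Real.log (Real.exp 1 + |G y| / ⨍ z, |G z| ∂μ)) ∂μ := by
  rcases eq_or_ne μ 0 with rfl | hμ
  · simp
  have hMr : 0 < (μ Set.univ).toReal :=
    ENNReal.toReal_pos (Measure.measure_univ_ne_zero.mpr hμ) (measure_ne_top μ _)
  set Mr := (μ Set.univ).toReal with hMrdef
  have havg : ∀ f : X → ℝ, (⨍ z, f z ∂μ) * Mr = ∫ z, f z ∂μ := by
    intro f
    rw [average_eq, smul_eq_mul]
    field_simp
    rw [show μ.real Set.univ = Mr from rfl, mul_div_assoc, div_self hMr.ne', mul_one]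
  set A := ⨍ z, |F z| ∂μ with hAdef
  set Bv := ⨍ z, |G z| ∂μ with hBdef
  set C := ⨍ z, |F z + G z| ∂μ with hCdef
  have hA0 : 0 ≤ A := by
    rw [hAdef, average_eq, smul_eq_mul]
    exact mul_nonneg (by positivity) (integral_nonneg fun z => abs_nonneg _)
  have hB0 : 0 ≤ Bv := by
    rw [hBdef, average_eq, smul_eq_mul]
    exact mul_nonneg (by positivity) (integral_nonneg fun z => abs_nonneg _)
  have hC0 : 0 ≤ C := by
    rw [hCdef, average_eq, smul_eq_mul]
    exact mul_nonneg (by positivity) (integral_nonneg fun z => abs_nonneg _)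
  rcases hA0.eq_or_lt with hA | hA
  · -- `A = 0` : then `F = 0` a.e. and the LHS equals the `G`-term.
    have hIF : ∫ z, |F z| ∂μ = 0 := by rw [← havg (fun z => |F z|), ← hAdef, ← hA, zero_mul]
    have hF0 : ∀ᵐ y ∂μ, F y = 0 := by
      have h := (integral_eq_zero_iff_of_nonneg (fun z => abs_nonneg (F z)) hF.abs).mp hIF
      filter_upwards [h] with y hy
      exact abs_eq_zero.mp hy
    have hCB : C = Bv := by
      rw [hCdef, hBdef]
      refine average_congr ?_
      filter_upwards [hF0] with y hy
      rw [hy, zero_add]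
    have hLHS : ∫⁻ y, ‖F y + G y‖₊ *
          ENNReal.ofReal (Real.log (Real.exp 1 + |F y + G y| / C)) ∂μ
        = ∫⁻ y, ‖G y‖₊ * ENNReal.ofReal (Real.log (Real.exp 1 + |G y| / Bv)) ∂μ := by
      refine lintegral_congr_ae ?_
      filter_upwards [hF0] with y hy
      rw [hCB, hy, zero_add]
    rw [hLHS]
    exact le_add_self
  rcases hB0.eq_or_lt with hB | hB
  · -- `Bv = 0` : then `G = 0` a.e. and the LHS equals the `F`-term.
    have hIG : ∫ z, |G z| ∂μ = 0 := by rw [← havg (fun z => |G z|), ← hBdef, ← hB, zero_mul]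
    have hG0 : ∀ᵐ y ∂μ, G y = 0 := by
      have h := (integral_eq_zero_iff_of_nonneg (fun z => abs_nonneg (G z)) hG.abs).mp hIG
      filter_upwards [h] with y hy
      exact abs_eq_zero.mp hy
    have hCA : C = A := by
      rw [hCdef, hAdef]
      refine average_congr ?_
      filter_upwards [hG0] with y hy
      rw [hy, add_zero]
    have hLHS : ∫⁻ y, ‖F y + G y‖₊ *
          ENNReal.ofReal (Real.log (Real.exp 1 + |F y + G y| / C)) ∂μ
        = ∫⁻ y, ‖F y‖₊ * ENNReal.ofReal (Real.log (Real.exp 1 + |F y| / A)) ∂μ := by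
      refine lintegral_congr_ae ?_
      filter_upwards [hG0] with y hy
      rw [hCA, hy, add_zero]
    rw [hLHS]
    exact le_self_add
  rcases hC0.eq_or_lt with hC | hC
  · -- `C = 0` : then `F + G = 0` a.e. and the LHS vanishes.
    have hIt : ∫ z, |F z + G z| ∂μ = 0 := by
      rw [← havg (fun z => |F z + G z|), ← hCdef, ← hC, zero_mul]
    have ht0 : ∀ᵐ y ∂μ, F y + G y = 0 := by
      have h := (integral_eq_zero_iff_of_nonneg (fun z => abs_nonneg (F z + G z))
        (hF.add hG).abs).mp hIt
      filter_upwards [h] with y hy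
      exact abs_eq_zero.mp hy
    have hLHS : ∫⁻ y, ‖F y + G y‖₊ *
          ENNReal.ofReal (Real.log (Real.exp 1 + |F y + G y| / C)) ∂μ = 0 := by
      rw [← lintegral_zero (μ := μ)]
      refine lintegral_congr_ae ?_
      filter_upwards [ht0] with y hy
      simp [hy]
    rw [hLHS]
    exact bot_le

  -- Main case: `A, Bv, C > 0`.
  have he : (0:ℝ) < Real.exp 1 := Real.exp_pos 1
  set t : X → ℝ := fun y => |F y + G y| with htdef
  have ht0 : ∀ y, 0 ≤ t y := fun y => abs_nonneg _
  have hD : ∀ y, 0 < Real.exp 1 * C + t y :=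
    fun y => add_pos_of_pos_of_nonneg (mul_pos he hC) (ht0 y)
  set α : X → ℝ := fun y =>
    Real.log (Real.exp 1 + t y / C) + t y / (Real.exp 1 * C + t y) with hαdef
  set γ : X → ℝ := fun y => t y ^ 2 / (C * (Real.exp 1 * C + t y)) with hγdef
  -- measurability
  have ht_int : Integrable t μ := (hF.add hG).abs
  have htm : AEMeasurable t μ := ht_int.aemeasurable
  have hlogm : AEMeasurable (fun y => Real.log (Real.exp 1 + t y / C)) μ :=
    Real.measurable_log.comp_aemeasurable (aemeasurable_const.add (htm.div_const C))
  have hαm : AEMeasurable α μ := hlogm.add (htm.div (aemeasurable_const.add htm))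
  have hγm : AEMeasurable γ μ :=
    (htm.pow_const 2).div ((aemeasurable_const.add htm).const_mul C)
  have hγ0 : ∀ y, 0 ≤ γ y := fun y => div_nonneg (sq_nonneg _) (mul_nonneg hC.le (hD y).le)
  have hγle : ∀ y, γ y ≤ t y / C := by
    intro y
    rw [hγdef]
    rw [div_le_div_iff₀ (mul_pos hC (hD y)) hC]
    nlinarith [mul_nonneg (mul_nonneg (mul_nonneg he.le hC.le) hC.le) (ht0 y)]
  have hTan : ∀ (u v : ℝ), 0 ≤ u → 0 < v → ∀ y,
      α y * u ≤ u * Real.log (Real.exp 1 + u / v) + γ y * v := by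
    intro u v hu hv y
    exact tangent_main u v (t y) C hu hv (ht0 y) hC
  have hEuler : ∀ y, α y * t y
      = t y * Real.log (Real.exp 1 + t y / C) + γ y * C :=
    fun y => euler_main (t y) C (ht0 y) hC
  have hγ_int : Integrable γ μ := by
    refine (ht_int.div_const C).mono' hγm.aestronglyMeasurable (ae_of_all _ fun y => ?_)
    rw [Real.norm_eq_abs, abs_of_nonneg (hγ0 y)]
    exact hγle y
  set Ig := ∫ y, γ y ∂μ with hIgdef
  have hIg0 : 0 ≤ Ig := integral_nonneg hγ0
  have hIt : ∫ y, t y ∂μ = C * Mr := by rw [hCdef]; exact (havg t).symm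
  have hIFa : ∫ y, |F y| ∂μ = A * Mr := by rw [hAdef]; exact (havg (fun z => |F z|)).symm
  have hIGa : ∫ y, |G y| ∂μ = Bv * Mr := by rw [hBdef]; exact (havg (fun z => |G z|)).symm
  have hIgle : Ig ≤ Mr := by
    have h1 : Ig ≤ ∫ y, t y / C ∂μ :=
      integral_mono hγ_int (ht_int.div_const C) hγle
    rw [integral_div, hIt, mul_comm, mul_div_assoc, div_self hC.ne', mul_one] at h1
    exact h1
  set gb := Ig / Mr with hgbdef
  have hgb0 : 0 ≤ gb := div_nonneg hIg0 hMr.le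
  have hgb1 : gb ≤ 1 := (div_le_one hMr).mpr hIgle
  set w : X → ℝ := fun y => α y - gb with hwdef
  have hwm : AEMeasurable w μ := hαm.sub aemeasurable_const
  have hw0 : ∀ y, 0 ≤ w y := by
    intro y
    have h1 := one_le_log_exp_add (t y / C) (div_nonneg (ht0 y) hC.le)
    have h2 : 0 ≤ t y / (Real.exp 1 * C + t y) := div_nonneg (ht0 y) (hD y).le
    have h3 : w y = Real.log (Real.exp 1 + t y / C) + t y / (Real.exp 1 * C + t y) - gb := rfl
    rw [h3]
    linarith
  -- rewrite the three Zygmund integrals as `ofReal`-integrals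
  have hgoalL : ∫⁻ y, ‖F y + G y‖₊ *
        ENNReal.ofReal (Real.log (Real.exp 1 + t y / C)) ∂μ
      = ∫⁻ y, ENNReal.ofReal (t y * Real.log (Real.exp 1 + t y / C)) ∂μ := by
    refine lintegral_congr fun y => ?_
    rw [← enorm_eq_nnnorm, Real.enorm_eq_ofReal_abs, ← ENNReal.ofReal_mul (abs_nonneg _)]
  have hgoalF : ∫⁻ y, ‖F y‖₊ *
        ENNReal.ofReal (Real.log (Real.exp 1 + |F y| / A)) ∂μ
      = ∫⁻ y, ENNReal.ofReal (|F y| * Real.log (Real.exp 1 + |F y| / A)) ∂μ := by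
    refine lintegral_congr fun y => ?_
    rw [← enorm_eq_nnnorm, Real.enorm_eq_ofReal_abs, ← ENNReal.ofReal_mul (abs_nonneg _)]
  have hgoalG : ∫⁻ y, ‖G y‖₊ *
        ENNReal.ofReal (Real.log (Real.exp 1 + |G y| / Bv)) ∂μ
      = ∫⁻ y, ENNReal.ofReal (|G y| * Real.log (Real.exp 1 + |G y| / Bv)) ∂μ := by
    refine lintegral_congr fun y => ?_
    rw [← enorm_eq_nnnorm, Real.enorm_eq_ofReal_abs, ← ENNReal.ofReal_mul (abs_nonneg _)]
  -- Step 1 : `∫ Φ(t, C) = ∫ w·t` (Euler identity plus the identity `⨍γ·∫t = C·∫γ`).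
  have hlog0 : ∀ y, 0 ≤ Real.log (Real.exp 1 + t y / C) :=
    fun y => le_trans zero_le_one (one_le_log_exp_add _ (div_nonneg (ht0 y) hC.le))
  have step1 : ∫⁻ y, ENNReal.ofReal (t y * Real.log (Real.exp 1 + t y / C)) ∂μ
      = ∫⁻ y, ENNReal.ofReal (w y * t y) ∂μ := by
    have key1 : ∀ y, ENNReal.ofReal (t y * Real.log (Real.exp 1 + t y / C))
          + ENNReal.ofReal (γ y * C)
        = ENNReal.ofReal (w y * t y) + ENNReal.ofReal (gb * t y) := by
      intro y
      rw [← ENNReal.ofReal_add (mul_nonneg (ht0 y) (hlog0 y)) (mul_nonneg (hγ0 y) hC.le),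
        ← ENNReal.ofReal_add (mul_nonneg (hw0 y) (ht0 y)) (mul_nonneg hgb0 (ht0 y))]
      congr 1
      have h1 := hEuler y
      have h2 : w y * t y + gb * t y = α y * t y := by rw [hwdef]; ring
      rw [h2, h1]
    have hsum : (∫⁻ y, ENNReal.ofReal (t y * Real.log (Real.exp 1 + t y / C)) ∂μ)
          + ∫⁻ y, ENNReal.ofReal (γ y * C) ∂μ
        = (∫⁻ y, ENNReal.ofReal (w y * t y) ∂μ)
          + ∫⁻ y, ENNReal.ofReal (gb * t y) ∂μ := by
      rw [← lintegral_add_left' ((htm.fun_mul hlogm).ennreal_ofReal),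
        ← lintegral_add_left' ((hwm.fun_mul htm).ennreal_ofReal)]
      exact lintegral_congr key1
    have e1 : ∫⁻ y, ENNReal.ofReal (γ y * C) ∂μ = ENNReal.ofReal (Ig * C) := by
      rw [← ofReal_integral_eq_lintegral_ofReal (hγ_int.mul_const C)
        (ae_of_all _ fun y => mul_nonneg (hγ0 y) hC.le), integral_mul_const]
    have e2 : ∫⁻ y, ENNReal.ofReal (gb * t y) ∂μ = ENNReal.ofReal (Ig * C) := by
      rw [← ofReal_integral_eq_lintegral_ofReal (ht_int.const_mul gb)
        (ae_of_all _ fun y => mul_nonneg hgb0 (ht0 y)), integral_const_mul, hIt]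
      congr 1
      rw [hgbdef]
      field_simp
    rw [e1, e2] at hsum
    exact (ENNReal.add_left_inj ENNReal.ofReal_ne_top).mp hsum
  -- Step 2 : `∫ w·t ≤ ∫ w·|F| + ∫ w·|G|` since `w ≥ 0` and `t ≤ |F| + |G|`.
  have step2 : ∫⁻ y, ENNReal.ofReal (w y * t y) ∂μ
      ≤ (∫⁻ y, ENNReal.ofReal (w y * |F y|) ∂μ)
        + ∫⁻ y, ENNReal.ofReal (w y * |G y|) ∂μ := by
    rw [← lintegral_add_left' ((hwm.fun_mul hF.abs.aemeasurable).ennreal_ofReal)]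
    refine lintegral_mono fun y => ?_
    rw [← ENNReal.ofReal_add (mul_nonneg (hw0 y) (abs_nonneg _))
      (mul_nonneg (hw0 y) (abs_nonneg _))]
    apply ENNReal.ofReal_le_ofReal
    have habs : t y ≤ |F y| + |G y| := abs_add_le _ _
    nlinarith [hw0 y]
  -- Step 3 : `∫ w·|H| ≤ ∫ Φ(|H|, V)` for `H = F, G`, via the tangent inequality.
  have step3 : ∀ (H : X → ℝ), Integrable H μ → ∀ (V : ℝ), 0 < V →
      (∫ y, |H y| ∂μ = V * Mr) →
      ∫⁻ y, ENNReal.ofReal (w y * |H y|) ∂μ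
        ≤ ∫⁻ y, ENNReal.ofReal (|H y| * Real.log (Real.exp 1 + |H y| / V)) ∂μ := by
    intro H hH V hV hIH
    have hHm : AEMeasurable (fun y => |H y|) μ := hH.abs.aemeasurable
    have hHlogm : AEMeasurable (fun y => Real.log (Real.exp 1 + |H y| / V)) μ :=
      Real.measurable_log.comp_aemeasurable (aemeasurable_const.add (hHm.div_const V))
    have hHlog0 : ∀ y, 0 ≤ Real.log (Real.exp 1 + |H y| / V) :=
      fun y => le_trans zero_le_one (one_le_log_exp_add _ (div_nonneg (abs_nonneg _) hV.le))
    have hmono : (∫⁻ y, ENNReal.ofReal (w y * |H y|) ∂μ)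
          + ∫⁻ y, ENNReal.ofReal (gb * |H y|) ∂μ
        ≤ (∫⁻ y, ENNReal.ofReal (|H y| * Real.log (Real.exp 1 + |H y| / V)) ∂μ)
          + ∫⁻ y, ENNReal.ofReal (γ y * V) ∂μ := by
      rw [← lintegral_add_left' ((hwm.fun_mul hHm).ennreal_ofReal),
        ← lintegral_add_left' ((hHm.fun_mul hHlogm).ennreal_ofReal)]
      refine lintegral_mono fun y => ?_
      rw [← ENNReal.ofReal_add (mul_nonneg (hw0 y) (abs_nonneg _))
        (mul_nonneg hgb0 (abs_nonneg _)),
        ← ENNReal.ofReal_add (mul_nonneg (abs_nonneg _) (hHlog0 y))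
        (mul_nonneg (hγ0 y) hV.le)]
      apply ENNReal.ofReal_le_ofReal
      have h := hTan (|H y|) V (abs_nonneg _) hV y
      have h2 : w y * |H y| + gb * |H y| = α y * |H y| := by rw [hwdef]; ring
      rw [h2]
      exact h
    have e1 : ∫⁻ y, ENNReal.ofReal (gb * |H y|) ∂μ = ENNReal.ofReal (Ig * V) := by
      rw [← ofReal_integral_eq_lintegral_ofReal (hH.abs.const_mul gb)
        (ae_of_all _ fun y => mul_nonneg hgb0 (abs_nonneg _)), integral_const_mul, hIH]
      congr 1
      rw [hgbdef]
      field_simp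
    have e2 : ∫⁻ y, ENNReal.ofReal (γ y * V) ∂μ = ENNReal.ofReal (Ig * V) := by
      rw [← ofReal_integral_eq_lintegral_ofReal (hγ_int.mul_const V)
        (ae_of_all _ fun y => mul_nonneg (hγ0 y) hV.le), integral_mul_const]
    rw [e1, e2] at hmono
    exact (ENNReal.add_le_add_iff_right ENNReal.ofReal_ne_top).mp hmono
  calc ∫⁻ y, ‖F y + G y‖₊ *
        ENNReal.ofReal (Real.log (Real.exp 1 + t y / C)) ∂μ
      = ∫⁻ y, ENNReal.ofReal (t y * Real.log (Real.exp 1 + t y / C)) ∂μ := hgoalL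
    _ = ∫⁻ y, ENNReal.ofReal (w y * t y) ∂μ := step1
    _ ≤ (∫⁻ y, ENNReal.ofReal (w y * |F y|) ∂μ)
        + ∫⁻ y, ENNReal.ofReal (w y * |G y|) ∂μ := step2
    _ ≤ (∫⁻ y, ENNReal.ofReal (|F y| * Real.log (Real.exp 1 + |F y| / A)) ∂μ)
        + ∫⁻ y, ENNReal.ofReal (|G y| * Real.log (Real.exp 1 + |G y| / Bv)) ∂μ :=
      add_le_add (step3 F hF A hA hIFa) (step3 G hG Bv hB hIGa)
    _ = _ := by rw [← hgoalF, ← hgoalG]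

/-- The Zygmund functional satisfies the triangle inequality on `L log L(B)`:
`‖F + G‖ ≤ ‖F‖ + ‖G‖`. -/
theorem zygmundNorm_triangle {n : ℕ} (x : EuclideanSpace ℝ (Fin n)) (r : ℝ) (hr : 0 < r)
    (F G : EuclideanSpace ℝ (Fin n) → ℝ)
    (hF : IntegrableOn F (Metric.ball x r) volume)
    (hG : IntegrableOn G (Metric.ball x r) volume) :
    zygmundNorm (Metric.ball x r) (F + G) ≤
      zygmundNorm (Metric.ball x r) F + zygmundNorm (Metric.ball x r) G := by
  haveI : IsFiniteMeasure (volume.restrict (Metric.ball x r)) :=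
    ⟨by rw [Measure.restrict_apply_univ]; exact measure_ball_lt_top⟩
  have h := zyg_key (volume.restrict (Metric.ball x r)) F G hF hG
  simpa only [zygmundNorm, Pi.add_apply] using h
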